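/- arXiv:2511.13137 — 2 statements merged into one kernel-verified Lean document; each statement's English description precedes it below -/
import Mathlib

section
/- VLB decomposition for a Markov chain: if q(z_{1:K}|z₀) = ∏ₖ q(z_k|z_{k-1}) is Markov and p_θ(z_{0:K}) = p(z_K) ∏ₖ p_θ(z_{k-1}|z_k), then E_q[ log( q(z_{1:K}|z₀)/p_θ(z_{0:K}) ) ] = E_q[ D_KL(q(z_K|z₀) ∥ p(z_K)) + Σₖ₌₂ᴷ D_KL(q(z_{k-1}|z_k, z₀) ∥ p_θ(z_{k-1}|z_k)) − log p_θ(z₀|z₁) ]. -/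
open Finset

variable {S : Type*}

/-- Full trajectory `z_0, z_1, …, z_K` obtained from the initial point `z₀` and the
latent path `z : Fin K → S` (so `fullz K z₀ z k = z_k`). -/
def fullz (K : ℕ) (z₀ : S) (z : Fin K → S) (k : ℕ) : S :=
  if h : k = 0 then z₀ else if h2 : k - 1 < K then z ⟨k - 1, h2⟩ else z₀

/-- Forward (Markov) path probability `q(z_{1:K} | z₀) = ∏_{k=1}^K q(z_k | z_{k-1})`. -/
def qpath (K : ℕ) (z₀ : S) (qstep : ℕ → S → S → ℝ) (z : Fin K → S) : ℝ :=
  ∏ k ∈ range K, qstep (k + 1) (fullz K z₀ z k) (fullz K z₀ z (k + 1))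

/-- Reverse model path probability `p_θ(z_{0:K}) = p(z_K) ∏_{k=1}^K p_θ(z_{k-1} | z_k)`. -/
def ppath (K : ℕ) (z₀ : S) (pK : S → ℝ) (pstep : ℕ → S → S → ℝ) (z : Fin K → S) : ℝ :=
  pK (fullz K z₀ z K) * ∏ k ∈ range K, pstep (k + 1) (fullz K z₀ z (k + 1)) (fullz K z₀ z k)

/-- Marginal `q(z_k = x | z₀)`. -/
def qmarg [Fintype S] [DecidableEq S] (K : ℕ) (z₀ : S) (qstep : ℕ → S → S → ℝ)
    (k : ℕ) (x : S) : ℝ :=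
  ∑ z : Fin K → S, if fullz K z₀ z k = x then qpath K z₀ qstep z else 0

/-- Reverse conditional `q(z_{k-1} = y | z_k = x, z₀)` obtained from Bayes' rule and the
Markov property. -/
noncomputable def qpost [Fintype S] [DecidableEq S] (K : ℕ) (z₀ : S) (qstep : ℕ → S → S → ℝ)
    (k : ℕ) (x y : S) : ℝ :=
  qstep k y x * qmarg K z₀ qstep (k - 1) y / qmarg K z₀ qstep k x

/-- Kullback–Leibler divergence between two distributions on a finite set. -/
noncomputable def klFin [Fintype S] (f g : S → ℝ) : ℝ :=
  ∑ x : S, f x * Real.log (f x / g x)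

section Aux
set_option linter.unusedSectionVars false
variable [Fintype S] [DecidableEq S]

lemma fullz_snoc_le (K : ℕ) (z₀ : S) (w : Fin K → S) (s : S) {k : ℕ} (hk : k ≤ K) :
    fullz (K+1) z₀ (Fin.snoc w s) k = fullz K z₀ w k := by
  rcases Nat.eq_zero_or_pos k with h | h
  · simp [fullz, h]
  · have h1 : k - 1 < K := by omega
    have h2 : k - 1 < K + 1 := by omega
    simp only [fullz, dif_neg (by omega : ¬ k = 0), dif_pos h1, dif_pos h2]
    have : (⟨k-1, h2⟩ : Fin (K+1)) = Fin.castSucc ⟨k-1, h1⟩ := rfl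
    rw [this, Fin.snoc_castSucc]

lemma fullz_snoc_top (K : ℕ) (z₀ : S) (w : Fin K → S) (s : S) :
    fullz (K+1) z₀ (Fin.snoc w s) (K+1) = s := by
  have h2 : K + 1 - 1 < K + 1 := by omega
  simp only [fullz, dif_neg (by omega : ¬ K + 1 = 0), dif_pos h2]
  have : (⟨K+1-1, h2⟩ : Fin (K+1)) = Fin.last K := rfl
  rw [this, Fin.snoc_last]

lemma qpath_snoc (K : ℕ) (z₀ : S) (qstep : ℕ → S → S → ℝ) (w : Fin K → S) (s : S) :
    qpath (K+1) z₀ qstep (Fin.snoc w s)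
      = qpath K z₀ qstep w * qstep (K+1) (fullz K z₀ w K) s := by
  rw [qpath, Finset.prod_range_succ, fullz_snoc_top, fullz_snoc_le K z₀ w s le_rfl]
  congr 1
  refine Finset.prod_congr rfl fun k hk => ?_
  have hk' : k < K := Finset.mem_range.mp hk
  rw [fullz_snoc_le K z₀ w s (by omega), fullz_snoc_le K z₀ w s (by omega)]

lemma sum_snoc (K : ℕ) [Fintype S] (f : (Fin (K+1) → S) → ℝ) :
    ∑ z : Fin (K+1) → S, f z = ∑ w : Fin K → S, ∑ s : S, f (Fin.snoc w s) := by
  calc ∑ z : Fin (K+1) → S, f z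
      = ∑ p : (Fin K → S) × S, f (Fin.snoc p.1 p.2) :=
        (Fintype.sum_bijective (fun p : (Fin K → S) × S => Fin.snoc p.1 p.2)
          (Function.bijective_iff_has_inverse.mpr
            ⟨fun z => (Fin.init z, z (Fin.last K)),
              fun p => by simp,
              fun z => Fin.snoc_init_self z⟩)
          (fun p => f (Fin.snoc p.1 p.2)) f (fun p => rfl)).symm
    _ = ∑ w : Fin K → S, ∑ s : S, f (Fin.snoc w s) := Fintype.sum_prod_type _

lemma qpath_pos (K : ℕ) (z₀ : S) (qstep : ℕ → S → S → ℝ)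
    (hq_pos : ∀ k x y, 0 < qstep k x y) (z : Fin K → S) : 0 < qpath K z₀ qstep z :=
  Finset.prod_pos fun _ _ => hq_pos _ _ _

lemma qpath_sum (K : ℕ) (z₀ : S) (qstep : ℕ → S → S → ℝ)
    (hq_sum : ∀ k x, ∑ y : S, qstep k x y = 1) :
    ∑ z : Fin K → S, qpath K z₀ qstep z = 1 := by
  induction K with
  | zero =>
    have : ∀ z : Fin 0 → S, qpath 0 z₀ qstep z = 1 := fun z => by simp [qpath]
    simp only [this]
    simp
  | succ K ih =>
    rw [sum_snoc]
    have : ∀ w : Fin K → S, ∑ s : S, qpath (K+1) z₀ qstep (Fin.snoc w s)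
        = qpath K z₀ qstep w := by
      intro w
      simp only [qpath_snoc]
      rw [← Finset.mul_sum, hq_sum, mul_one]
    simp only [this, ih]

/-- Generic truncation: expectations of functions of two coordinates `≤ k` don't depend on the
chain length beyond `k`. -/

lemma qsum_trunc (z₀ : S) (qstep : ℕ → S → S → ℝ)
    (hq_sum : ∀ k x, ∑ y : S, qstep k x y = 1)
    (k j i : ℕ) (hj : j ≤ k) (hi : i ≤ k) (G : S → S → ℝ) :
    ∀ K, k ≤ K →
      ∑ z : Fin K → S, qpath K z₀ qstep z * G (fullz K z₀ z j) (fullz K z₀ z i)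
        = ∑ z : Fin k → S, qpath k z₀ qstep z * G (fullz k z₀ z j) (fullz k z₀ z i) := by
  refine Nat.le_induction rfl ?_
  intro K hK ih
  rw [← ih, sum_snoc]
  have : ∀ w : Fin K → S, ∑ s : S,
      qpath (K+1) z₀ qstep (Fin.snoc w s)
        * G (fullz (K+1) z₀ (Fin.snoc w s) j) (fullz (K+1) z₀ (Fin.snoc w s) i)
      = qpath K z₀ qstep w * G (fullz K z₀ w j) (fullz K z₀ w i) := by
    intro w
    have hj' : j ≤ K := le_trans hj hK
    have hi' : i ≤ K := le_trans hi hK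
    simp only [qpath_snoc, fullz_snoc_le K z₀ w _ hj', fullz_snoc_le K z₀ w _ hi']
    rw [show (∑ s : S, qpath K z₀ qstep w * qstep (K+1) (fullz K z₀ w K) s
          * G (fullz K z₀ w j) (fullz K z₀ w i))
        = qpath K z₀ qstep w * G (fullz K z₀ w j) (fullz K z₀ w i)
          * ∑ s : S, qstep (K+1) (fullz K z₀ w K) s from by
        rw [Finset.mul_sum]; exact Finset.sum_congr rfl fun s _ => by ring,
      hq_sum, mul_one]
  simp only [this]

lemma qmarg_eq_qsum (K : ℕ) (z₀ : S) (qstep : ℕ → S → S → ℝ) (k : ℕ) (x : S) :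
    qmarg K z₀ qstep k x
      = ∑ z : Fin K → S, qpath K z₀ qstep z * (if fullz K z₀ z k = x then 1 else 0) := by
  simp [qmarg, mul_ite, mul_one, mul_zero]

lemma qmarg_trunc (z₀ : S) (qstep : ℕ → S → S → ℝ)
    (hq_sum : ∀ k x, ∑ y : S, qstep k x y = 1) {K k : ℕ} (hk : k ≤ K) (x : S) :
    qmarg K z₀ qstep k x = qmarg k z₀ qstep k x := by
  rw [qmarg_eq_qsum, qmarg_eq_qsum]
  exact qsum_trunc z₀ qstep hq_sum k k k le_rfl le_rfl (fun _ u => if u = x then 1 else 0) K hk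

lemma qmarg_sum (K : ℕ) (z₀ : S) (qstep : ℕ → S → S → ℝ)
    (hq_sum : ∀ k x, ∑ y : S, qstep k x y = 1) (k : ℕ) :
    ∑ x : S, qmarg K z₀ qstep k x = 1 := by
  unfold qmarg
  rw [Finset.sum_comm]
  simp [Finset.sum_ite_eq, qpath_sum K z₀ qstep hq_sum]

lemma qmarg_nonneg (K : ℕ) (z₀ : S) (qstep : ℕ → S → S → ℝ)
    (hq_pos : ∀ k x y, 0 < qstep k x y) (k : ℕ) (x : S) :
    0 ≤ qmarg K z₀ qstep k x := by
  refine Finset.sum_nonneg fun z _ => ?_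
  split
  · exact (qpath_pos K z₀ qstep hq_pos z).le
  · exact le_refl 0

lemma qmarg_pos (z₀ : S) (qstep : ℕ → S → S → ℝ)
    (hq_pos : ∀ k x y, 0 < qstep k x y) (hq_sum : ∀ k x, ∑ y : S, qstep k x y = 1)
    {K k : ℕ} (hk1 : 1 ≤ k) (hk : k ≤ K) (x : S) :
    0 < qmarg K z₀ qstep k x := by
  rw [qmarg_trunc z₀ qstep hq_sum hk]
  refine Finset.sum_pos' (fun z _ => ?_) ⟨fun _ => x, Finset.mem_univ _, ?_⟩
  · split
    · exact (qpath_pos k z₀ qstep hq_pos z).le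
    · exact le_refl 0
  · rw [if_pos]
    · exact qpath_pos k z₀ qstep hq_pos _
    · simp only [fullz, dif_neg (by omega : ¬ k = 0), dif_pos (by omega : k - 1 < k)]

lemma qmarg_one (K : ℕ) (z₀ : S) (qstep : ℕ → S → S → ℝ)
    (hq_sum : ∀ k x, ∑ y : S, qstep k x y = 1) (hK : 1 ≤ K) (x : S) :
    qmarg K z₀ qstep 1 x = qstep 1 z₀ x := by
  rw [qmarg_trunc z₀ qstep hq_sum hK, qmarg]
  rw [show (1 : ℕ) = 0 + 1 from rfl] -- make Fin 1 = Fin (0+1) for sum_snoc? maybe unneeded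
  rw [sum_snoc 0 (fun z => if fullz (0+1) z₀ z (0+1) = x then qpath (0+1) z₀ qstep z else 0)]
  have : ∀ (w : Fin 0 → S) (s : S),
      (if fullz (0+1) z₀ (Fin.snoc w s) (0+1) = x then qpath (0+1) z₀ qstep (Fin.snoc w s) else 0)
      = (if s = x then qstep 1 z₀ s else 0) := by
    intro w s
    rw [fullz_snoc_top, qpath_snoc]
    simp [qpath, fullz]
  simp only [this]
  simp [Finset.sum_ite_eq']

lemma qjoint (z₀ : S) (qstep : ℕ → S → S → ℝ)
    (hq_sum : ∀ k x, ∑ y : S, qstep k x y = 1)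
    {K k : ℕ} (hk1 : 1 ≤ k) (hk : k ≤ K) (y x : S) :
    ∑ z : Fin K → S, qpath K z₀ qstep z
        * (if fullz K z₀ z (k-1) = y ∧ fullz K z₀ z k = x then 1 else 0)
      = qmarg K z₀ qstep (k-1) y * qstep k y x := by
  rw [qsum_trunc z₀ qstep hq_sum k (k-1) k (by omega) le_rfl
    (fun u v => if u = y ∧ v = x then 1 else 0) K hk]
  obtain ⟨m, rfl⟩ : ∃ m, k = m + 1 := ⟨k - 1, by omega⟩
  rw [qmarg_trunc z₀ qstep hq_sum (show m + 1 - 1 ≤ K by omega)]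
  simp only [Nat.add_sub_cancel]
  rw [sum_snoc m (fun z => qpath (m+1) z₀ qstep z
      * (if fullz (m+1) z₀ z m = y ∧ fullz (m+1) z₀ z (m+1) = x then 1 else 0))]
  have key : ∀ w : Fin m → S, (∑ s : S, qpath (m+1) z₀ qstep (Fin.snoc w s)
      * (if fullz (m+1) z₀ (Fin.snoc w s) m = y ∧ fullz (m+1) z₀ (Fin.snoc w s) (m+1) = x
          then 1 else 0))
      = (if fullz m z₀ w m = y then qpath m z₀ qstep w else 0) * qstep (m+1) y x := by
    intro w
    simp only [qpath_snoc, fullz_snoc_top, fullz_snoc_le m z₀ w _ le_rfl]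
    by_cases h : fullz m z₀ w m = y
    · simp only [h, true_and, if_pos, mul_ite, mul_one, mul_zero, ite_mul, zero_mul]
      simp [Finset.sum_ite_eq']
    · simp [h]
  simp only [key]
  rw [← Finset.sum_mul, qmarg]

lemma exp_single (K : ℕ) (z₀ : S) (qstep : ℕ → S → S → ℝ) (k : ℕ) (f : S → ℝ) :
    ∑ z : Fin K → S, qpath K z₀ qstep z * f (fullz K z₀ z k)
      = ∑ x : S, qmarg K z₀ qstep k x * f x := by
  have h1 : ∀ z : Fin K → S, qpath K z₀ qstep z * f (fullz K z₀ z k)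
      = ∑ x : S, (if fullz K z₀ z k = x then qpath K z₀ qstep z * f x else 0) := fun z => by
    simp [Finset.sum_ite_eq]
  have h2 : ∀ x : S,
      (∑ z : Fin K → S, if fullz K z₀ z k = x then qpath K z₀ qstep z * f x else 0)
        = qmarg K z₀ qstep k x * f x := fun x => by
    unfold qmarg
    rw [Finset.sum_mul]
    exact Finset.sum_congr rfl fun z _ => by split <;> simp
  simp only [h1]
  rw [Finset.sum_comm]
  exact Finset.sum_congr rfl fun x _ => h2 x

lemma exp_pair (z₀ : S) (qstep : ℕ → S → S → ℝ)
    (hq_sum : ∀ k x, ∑ y : S, qstep k x y = 1)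
    {K k : ℕ} (hk1 : 1 ≤ k) (hk : k ≤ K) (g : S → S → ℝ) :
    ∑ z : Fin K → S, qpath K z₀ qstep z * g (fullz K z₀ z (k-1)) (fullz K z₀ z k)
      = ∑ y : S, ∑ x : S, qmarg K z₀ qstep (k-1) y * qstep k y x * g y x := by
  have h1 : ∀ z : Fin K → S, qpath K z₀ qstep z * g (fullz K z₀ z (k-1)) (fullz K z₀ z k)
      = ∑ y : S, ∑ x : S, (if fullz K z₀ z (k-1) = y ∧ fullz K z₀ z k = x
          then qpath K z₀ qstep z * g y x else 0) := fun z => by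
    simp [ite_and, Finset.sum_ite_eq]
  have h2 : ∀ y x : S,
      (∑ z : Fin K → S, if fullz K z₀ z (k-1) = y ∧ fullz K z₀ z k = x
          then qpath K z₀ qstep z * g y x else 0)
        = qmarg K z₀ qstep (k-1) y * qstep k y x * g y x := fun y x => by
    rw [← qjoint z₀ qstep hq_sum hk1 hk y x, Finset.sum_mul]
    exact Finset.sum_congr rfl fun z _ => by split <;> simp
  simp only [h1]
  rw [Finset.sum_comm]
  refine Finset.sum_congr rfl fun y _ => ?_
  rw [Finset.sum_comm]
  exact Finset.sum_congr rfl fun x _ => h2 y x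

lemma sum_Icc_two (n : ℕ) (G : ℕ → ℝ) :
    ∑ k ∈ Finset.Icc 2 (n+1), G k = ∑ i ∈ range n, G (i+2) := by
  induction n with
  | zero => simp
  | succ m ih =>
    rw [Finset.sum_Icc_succ_top (by omega), ih, Finset.sum_range_succ]

lemma pointwise (K : ℕ) (hK : 1 ≤ K) (z₀ : S) (qstep : ℕ → S → S → ℝ)
    (pK : S → ℝ) (pstep : ℕ → S → S → ℝ)
    (hq_pos : ∀ k x y, 0 < qstep k x y) (hq_sum : ∀ k x, ∑ y : S, qstep k x y = 1)
    (hpK_pos : ∀ x, 0 < pK x) (hp_pos : ∀ k x y, 0 < pstep k x y) (z : Fin K → S) :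
    Real.log (qpath K z₀ qstep z / ppath K z₀ pK pstep z)
      = (Real.log (qmarg K z₀ qstep K (fullz K z₀ z K)) - Real.log (pK (fullz K z₀ z K)))
        + ∑ k ∈ Finset.Icc 2 K,
            (Real.log (qpost K z₀ qstep k (fullz K z₀ z k) (fullz K z₀ z (k-1)))
              - Real.log (pstep k (fullz K z₀ z k) (fullz K z₀ z (k-1))))
        - Real.log (pstep 1 (fullz K z₀ z 1) z₀) := by
  set Z : ℕ → S := fullz K z₀ z with hZ
  set M : ℕ → ℝ := fun k => Real.log (qmarg K z₀ qstep k (Z k)) with hM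
  set F : ℕ → ℝ := fun i => Real.log (qstep (i+1) (Z i) (Z (i+1))) with hF
  obtain ⟨n, rfl⟩ : ∃ n, K = n + 1 := ⟨K - 1, by omega⟩
  have hq : (0:ℝ) < qpath (n+1) z₀ qstep z := qpath_pos _ z₀ qstep hq_pos z
  have hp : (0:ℝ) < ppath (n+1) z₀ pK pstep z :=
    mul_pos (hpK_pos _) (Finset.prod_pos fun _ _ => hp_pos _ _ _)
  rw [Real.log_div hq.ne' hp.ne']
  have hlq : Real.log (qpath (n+1) z₀ qstep z) = ∑ i ∈ range (n+1), F i := by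
    rw [qpath, Real.log_prod fun i _ => (hq_pos _ _ _).ne']
  have hlp : Real.log (ppath (n+1) z₀ pK pstep z)
      = Real.log (pK (Z (n+1)))
        + ∑ i ∈ range (n+1), Real.log (pstep (i+1) (Z (i+1)) (Z i)) := by
    rw [ppath, Real.log_mul (hpK_pos _).ne'
      (Finset.prod_pos fun _ _ => hp_pos _ _ _).ne',
      Real.log_prod fun i _ => (hp_pos _ _ _).ne']
  have hpost : ∀ i ∈ range n,
      Real.log (qpost (n+1) z₀ qstep (i+2) (Z (i+2)) (Z (i+2-1)))
        = F (i+1) + M (i+1) - M (i+2) := by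
    intro i hi
    have hi' : i < n := Finset.mem_range.mp hi
    have h1 : 0 < qmarg (n+1) z₀ qstep (i+1) (Z (i+1)) :=
      qmarg_pos z₀ qstep hq_pos hq_sum (by omega) (by omega) _
    have h2 : 0 < qmarg (n+1) z₀ qstep (i+2) (Z (i+2)) :=
      qmarg_pos z₀ qstep hq_pos hq_sum (by omega) (by omega) _
    rw [qpost]
    simp only [show i+2-1 = i+1 from rfl]
    rw [Real.log_div (mul_pos (hq_pos _ _ _) h1).ne' h2.ne', Real.log_mul (hq_pos _ _ _).ne' h1.ne']
  have htel : ∑ i ∈ range n, (F (i+1) + M (i+1) - M (i+2))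
      = (∑ i ∈ range n, F (i+1)) + (M 1 - M (n+1)) := by
    have h := Finset.sum_range_sub' (fun i => M (i+1)) n
    rw [show (∑ i ∈ range n, (F (i+1) + M (i+1) - M (i+2)))
        = (∑ i ∈ range n, F (i+1)) + ∑ i ∈ range n, (M (i+1) - M (i+1+1)) from by
      rw [← Finset.sum_add_distrib]; exact Finset.sum_congr rfl fun i _ => by ring]
    rw [h]
  have hF0 : F 0 = M 1 := by
    have hZ0 : Z 0 = z₀ := by rw [hZ]; simp [fullz]
    simp only [hF, hM]
    rw [qmarg_one (n+1) z₀ qstep hq_sum (by omega) (Z 1), hZ0]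
  have key : ∑ i ∈ range (n+1), F i
      = M (n+1) + ∑ k ∈ Finset.Icc 2 (n+1),
          Real.log (qpost (n+1) z₀ qstep k (Z k) (Z (k-1))) := by
    rw [Finset.sum_range_succ' F n,
      sum_Icc_two n (fun k => Real.log (qpost (n+1) z₀ qstep k (Z k) (Z (k-1)))),
      Finset.sum_congr rfl hpost, htel, hF0]
    ring
  have hpIcc : ∑ i ∈ range (n+1), Real.log (pstep (i+1) (Z (i+1)) (Z i))
      = Real.log (pstep 1 (Z 1) (Z 0))
        + ∑ k ∈ Finset.Icc 2 (n+1), Real.log (pstep k (Z k) (Z (k-1))) := by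
    rw [Finset.sum_range_succ' (fun i => Real.log (pstep (i+1) (Z (i+1)) (Z i))) n,
      sum_Icc_two n (fun k => Real.log (pstep k (Z k) (Z (k-1))))]
    have e : (∑ x ∈ range n, Real.log (pstep (x+2) (Z (x+2)) (Z (x+2-1))))
        = ∑ x ∈ range n, Real.log (pstep (x+1+1) (Z (x+1+1)) (Z (x+1))) :=
      Finset.sum_congr rfl fun x _ => rfl
    rw [e]
    ring
  have hZ0 : Z 0 = z₀ := by rw [hZ]; simp [fullz]
  rw [hlq, hlp, key, hpIcc, hZ0, Finset.sum_sub_distrib]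
  ring

lemma sum_mul_add_sub {α : Type*} (s : Finset α) (q A B C : α → ℝ) :
    ∑ z ∈ s, q z * (A z + B z - C z)
      = (∑ z ∈ s, q z * A z) + (∑ z ∈ s, q z * B z) - ∑ z ∈ s, q z * C z := by
  simp only [mul_add, mul_sub, Finset.sum_add_distrib, Finset.sum_sub_distrib]

end Aux

/-- VLB decomposition for a Markov chain: the expected log-ratio
`E_q[log(q(z_{1:K}|z₀)/p_θ(z_{0:K}))]` equals
`D_KL(q(z_K|z₀) ∥ p(z_K)) + Σ_{k=2}^K E_{q(z_k|z₀)} D_KL(q(z_{k-1}|z_k,z₀) ∥ p_θ(z_{k-1}|z_k))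
 - E_{q(z_1|z₀)}[log p_θ(z₀|z₁)]`. -/
theorem stmt_9 [Fintype S] [DecidableEq S] [Nonempty S] (K : ℕ) (hK : 1 ≤ K) (z₀ : S)
    (qstep : ℕ → S → S → ℝ) (pK : S → ℝ) (pstep : ℕ → S → S → ℝ)
    (hq_pos : ∀ k x y, 0 < qstep k x y) (hq_sum : ∀ k x, ∑ y : S, qstep k x y = 1)
    (hpK_pos : ∀ x, 0 < pK x) (hpK_sum : ∑ x : S, pK x = 1)
    (hp_pos : ∀ k x y, 0 < pstep k x y) (hp_sum : ∀ k x, ∑ y : S, pstep k x y = 1) :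
    ∑ z : Fin K → S, qpath K z₀ qstep z * Real.log (qpath K z₀ qstep z / ppath K z₀ pK pstep z) =
      klFin (qmarg K z₀ qstep K) pK +
        ∑ k ∈ Finset.Icc 2 K, ∑ x : S,
          qmarg K z₀ qstep k x * klFin (qpost K z₀ qstep k x) (fun y => pstep k x y) -
        ∑ x : S, qmarg K z₀ qstep 1 x * Real.log (pstep 1 x z₀) := by

  have e0 : (∑ z : Fin K → S,
        qpath K z₀ qstep z * Real.log (qpath K z₀ qstep z / ppath K z₀ pK pstep z))
      = ∑ z : Fin K → S, qpath K z₀ qstep z *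
          ((Real.log (qmarg K z₀ qstep K (fullz K z₀ z K)) - Real.log (pK (fullz K z₀ z K)))
            + (∑ k ∈ Finset.Icc 2 K,
                (Real.log (qpost K z₀ qstep k (fullz K z₀ z k) (fullz K z₀ z (k-1)))
                  - Real.log (pstep k (fullz K z₀ z k) (fullz K z₀ z (k-1)))))
            - Real.log (pstep 1 (fullz K z₀ z 1) z₀)) :=
    Finset.sum_congr rfl fun z _ => by
      rw [pointwise K hK z₀ qstep pK pstep hq_pos hq_sum hpK_pos hp_pos z]
  rw [e0, sum_mul_add_sub Finset.univ (qpath K z₀ qstep)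
    (fun z => Real.log (qmarg K z₀ qstep K (fullz K z₀ z K)) - Real.log (pK (fullz K z₀ z K)))
    (fun z => ∑ k ∈ Finset.Icc 2 K,
        (Real.log (qpost K z₀ qstep k (fullz K z₀ z k) (fullz K z₀ z (k-1)))
          - Real.log (pstep k (fullz K z₀ z k) (fullz K z₀ z (k-1)))))
    (fun z => Real.log (pstep 1 (fullz K z₀ z 1) z₀))]
  -- T1
  have hT1 : (∑ z : Fin K → S, qpath K z₀ qstep z *
        (Real.log (qmarg K z₀ qstep K (fullz K z₀ z K)) - Real.log (pK (fullz K z₀ z K))))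
      = klFin (qmarg K z₀ qstep K) pK := by
    rw [exp_single K z₀ qstep K
      (fun x => Real.log (qmarg K z₀ qstep K x) - Real.log (pK x)), klFin]
    refine Finset.sum_congr rfl fun x _ => ?_
    rw [Real.log_div (qmarg_pos z₀ qstep hq_pos hq_sum hK le_rfl x).ne' (hpK_pos x).ne']
  -- T3
  have hT3 : (∑ z : Fin K → S, qpath K z₀ qstep z * Real.log (pstep 1 (fullz K z₀ z 1) z₀))
      = ∑ x : S, qmarg K z₀ qstep 1 x * Real.log (pstep 1 x z₀) :=
    exp_single K z₀ qstep 1 (fun x => Real.log (pstep 1 x z₀))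
  -- T2
  have hT2 : (∑ z : Fin K → S, qpath K z₀ qstep z *
        ∑ k ∈ Finset.Icc 2 K,
          (Real.log (qpost K z₀ qstep k (fullz K z₀ z k) (fullz K z₀ z (k-1)))
            - Real.log (pstep k (fullz K z₀ z k) (fullz K z₀ z (k-1)))))
      = ∑ k ∈ Finset.Icc 2 K, ∑ x : S,
          qmarg K z₀ qstep k x * klFin (qpost K z₀ qstep k x) (fun y => pstep k x y) := by
    simp only [Finset.mul_sum]
    rw [Finset.sum_comm]
    refine Finset.sum_congr rfl fun k hk => ?_
    obtain ⟨hk2, hkK⟩ := Finset.mem_Icc.mp hk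
    have hk1 : 1 ≤ k := by omega
    rw [exp_pair z₀ qstep hq_sum hk1 hkK
      (fun y x => Real.log (qpost K z₀ qstep k x y) - Real.log (pstep k x y))]
    have hright : ∀ x : S,
        qmarg K z₀ qstep k x * klFin (qpost K z₀ qstep k x) (fun y => pstep k x y)
          = ∑ y : S, qmarg K z₀ qstep (k-1) y * qstep k y x *
              (Real.log (qpost K z₀ qstep k x y) - Real.log (pstep k x y)) := by
      intro x
      rw [klFin, Finset.mul_sum]
      refine Finset.sum_congr rfl fun y _ => ?_
      have hmx : 0 < qmarg K z₀ qstep k x :=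
        qmarg_pos z₀ qstep hq_pos hq_sum hk1 hkK x
      have hmy : 0 < qmarg K z₀ qstep (k-1) y :=
        qmarg_pos z₀ qstep hq_pos hq_sum (by omega) (by omega) y
      have hqp : 0 < qpost K z₀ qstep k x y := by
        rw [qpost]; exact div_pos (mul_pos (hq_pos _ _ _) hmy) hmx
      have hcancel : qmarg K z₀ qstep k x * qpost K z₀ qstep k x y
          = qmarg K z₀ qstep (k-1) y * qstep k y x := by
        rw [qpost, mul_div_assoc', mul_comm, mul_div_assoc, div_self hmx.ne', mul_one]
        ring
      rw [Real.log_div hqp.ne' (hp_pos k x y).ne', ← mul_assoc, hcancel]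
    rw [Finset.sum_congr rfl fun x _ => hright x, Finset.sum_comm]
  rw [hT1, hT2, hT3]
end

section
/- Linearization of quadratic cross terms: suppose for each i, Qᵢ(aᵢ) = αᵢ + βᵢ(aᵢ − aᵢ°)² + o((aᵢ − aᵢ°)²). Then for any symmetric coefficients μ_{ij}, the bilinear form Σ_{i,j} μ_{ij} Qᵢ(aᵢ) Qⱼ(aⱼ) = −Σ_{i,j} μ_{ij} αᵢ αⱼ + 2 Σᵢ (Σⱼ μ_{ij} αⱼ) Qᵢ(aᵢ) + o(‖a − a°‖²) as a → a°; i.e., up to second order, the quadratic term in the individual values reduces to an affine function of the individual values. -/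
open Asymptotics

lemma coord_le_norm {N : ℕ} (x : EuclideanSpace ℝ (Fin N)) (i : Fin N) :
    |x i| ≤ ‖x‖ := by
  rw [EuclideanSpace.norm_eq]
  calc |x i| = Real.sqrt (‖x i‖ ^ 2) := by
        rw [Real.sqrt_sq_eq_abs, abs_norm, Real.norm_eq_abs]
    _ ≤ Real.sqrt (∑ j, ‖x j‖ ^ 2) := by
        apply Real.sqrt_le_sqrt
        exact Finset.single_le_sum (f := fun j => ‖x j‖ ^ 2)
          (fun j _ => by positivity) (Finset.mem_univ i)

/-- Linearization of quadratic cross terms: if each `Qᵢ(aᵢ) = αᵢ + βᵢ(aᵢ-aᵢ°)² + o((aᵢ-aᵢ°)²)`,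
then for symmetric coefficients `μᵢⱼ`,
`Σᵢⱼ μᵢⱼ Qᵢ(aᵢ) Qⱼ(aⱼ) = -Σᵢⱼ μᵢⱼ αᵢ αⱼ + 2 Σᵢ (Σⱼ μᵢⱼ αⱼ) Qᵢ(aᵢ) + o(‖a-a°‖²)` as `a → a°`. -/
theorem stmt_15 (N : ℕ) (Q : Fin N → ℝ → ℝ) (α β : Fin N → ℝ)
    (a₀ : EuclideanSpace ℝ (Fin N))
    (hQ : ∀ i, (fun t : ℝ => Q i t - (α i + β i * (t - a₀ i) ^ 2))
        =o[nhds (a₀ i)] fun t => (t - a₀ i) ^ 2)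
    (μ : Fin N → Fin N → ℝ) (hμ : ∀ i j, μ i j = μ j i) :
    (fun a : EuclideanSpace ℝ (Fin N) =>
        (∑ i, ∑ j, μ i j * Q i (a i) * Q j (a j)) -
          (-(∑ i, ∑ j, μ i j * α i * α j) + 2 * ∑ i, (∑ j, μ i j * α j) * Q i (a i)))
      =o[nhds a₀] fun a => ‖a - a₀‖ ^ 2 := by
  -- B i a := Q i (a i) - α i
  -- Step 1: each B i is O((a i - a₀ i)^2) near a₀ (in one variable), hence O(‖a-a₀‖²).
  have hQO : ∀ i, (fun t : ℝ => Q i t - α i) =O[nhds (a₀ i)] fun t => (t - a₀ i) ^ 2 := by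
    intro i
    have h1 : (fun t : ℝ => Q i t - (α i + β i * (t - a₀ i) ^ 2))
        =O[nhds (a₀ i)] fun t => (t - a₀ i) ^ 2 := (hQ i).isBigO
    have h2 : (fun t : ℝ => β i * (t - a₀ i) ^ 2)
        =O[nhds (a₀ i)] fun t => (t - a₀ i) ^ 2 :=
      (isBigO_refl _ _).const_mul_left _
    exact (h1.add h2).congr_left fun t => by ring
  have htends : ∀ i, Filter.Tendsto (fun a : EuclideanSpace ℝ (Fin N) => a i)
      (nhds a₀) (nhds (a₀ i)) := by
    intro i
    exact ((EuclideanSpace.proj i : EuclideanSpace ℝ (Fin N) →L[ℝ] ℝ).continuous).tendsto a₀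
  have hsq : ∀ i, (fun a : EuclideanSpace ℝ (Fin N) => (a i - a₀ i) ^ 2)
      =O[nhds a₀] fun a => ‖a - a₀‖ ^ 2 := by
    intro i
    apply IsBigO.of_bound 1
    filter_upwards with a
    have h := coord_le_norm (a - a₀) i
    have hai : (a - a₀) i = a i - a₀ i := rfl
    rw [hai] at h
    have : |a i - a₀ i| ^ 2 ≤ ‖a - a₀‖ ^ 2 := by
      apply pow_le_pow_left₀ (abs_nonneg _) h
    simpa [abs_pow, sq_abs] using this
  have hBO : ∀ i, (fun a : EuclideanSpace ℝ (Fin N) => Q i (a i) - α i)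
      =O[nhds a₀] fun a => ‖a - a₀‖ ^ 2 := fun i =>
    ((hQO i).comp_tendsto (htends i)).trans (hsq i)
  -- Step 2: each B j is o(1).
  have hBo : ∀ j, (fun a : EuclideanSpace ℝ (Fin N) => Q j (a j) - α j)
      =o[nhds a₀] (fun _ => (1 : ℝ)) := by
    intro j
    rw [isLittleO_one_iff]
    have h0 : Filter.Tendsto (fun a : EuclideanSpace ℝ (Fin N) => (a j - a₀ j) ^ 2)
        (nhds a₀) (nhds 0) := by
      have : Filter.Tendsto (fun a : EuclideanSpace ℝ (Fin N) => a j - a₀ j)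
          (nhds a₀) (nhds 0) := by
        simpa using (htends j).sub_const (a₀ j)
      simpa using this.pow 2
    exact (((hQO j).comp_tendsto (htends j)).trans_tendsto h0)
  -- Step 3: rewrite expression as ∑ᵢⱼ μᵢⱼ Bᵢ Bⱼ.
  have key : ∀ a : EuclideanSpace ℝ (Fin N),
      (∑ i, ∑ j, μ i j * Q i (a i) * Q j (a j)) -
        (-(∑ i, ∑ j, μ i j * α i * α j) + 2 * ∑ i, (∑ j, μ i j * α j) * Q i (a i))
      = ∑ i, ∑ j, μ i j * ((Q i (a i) - α i) * (Q j (a j) - α j)) := by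
    intro a
    have hswap : ∑ i, ∑ j, μ i j * Q i (a i) * α j
        = ∑ i, ∑ j, μ i j * α i * Q j (a j) := by
      rw [Finset.sum_comm]
      apply Finset.sum_congr rfl; intro i _
      apply Finset.sum_congr rfl; intro j _
      rw [hμ j i]; ring
    have expand : ∑ i, ∑ j, μ i j * ((Q i (a i) - α i) * (Q j (a j) - α j))
        = (∑ i, ∑ j, μ i j * Q i (a i) * Q j (a j))
          - (∑ i, ∑ j, μ i j * Q i (a i) * α j)
          - (∑ i, ∑ j, μ i j * α i * Q j (a j))
          + (∑ i, ∑ j, μ i j * α i * α j) := by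
      rw [← Finset.sum_sub_distrib, ← Finset.sum_sub_distrib, ← Finset.sum_add_distrib]
      apply Finset.sum_congr rfl; intro i _
      rw [← Finset.sum_sub_distrib, ← Finset.sum_sub_distrib, ← Finset.sum_add_distrib]
      apply Finset.sum_congr rfl; intro j _
      ring
    have hmulsum : 2 * ∑ i, (∑ j, μ i j * α j) * Q i (a i)
        = 2 * ∑ i, ∑ j, μ i j * α j * Q i (a i) := by
      congr 1
      apply Finset.sum_congr rfl; intro i _
      rw [Finset.sum_mul]
    have hswap2 : ∑ i, ∑ j, μ i j * α j * Q i (a i)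
        = ∑ i, ∑ j, μ i j * α i * Q j (a j) := by
      rw [Finset.sum_comm]
      apply Finset.sum_congr rfl; intro i _
      apply Finset.sum_congr rfl; intro j _
      rw [hμ j i]
    rw [expand, hmulsum, hswap2]
    rw [hswap]
    ring
  rw [show (fun a : EuclideanSpace ℝ (Fin N) =>
        (∑ i, ∑ j, μ i j * Q i (a i) * Q j (a j)) -
          (-(∑ i, ∑ j, μ i j * α i * α j) + 2 * ∑ i, (∑ j, μ i j * α j) * Q i (a i)))
      = fun a => ∑ i, ∑ j, μ i j * ((Q i (a i) - α i) * (Q j (a j) - α j)) from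
    funext key]
  -- Step 4: the double sum is o(‖a-a₀‖²).
  apply Asymptotics.IsLittleO.fun_sum; intro i _
  apply Asymptotics.IsLittleO.fun_sum; intro j _
  have hprod : (fun a : EuclideanSpace ℝ (Fin N) =>
      (Q i (a i) - α i) * (Q j (a j) - α j)) =o[nhds a₀]
      fun a => ‖a - a₀‖ ^ 2 * 1 := (hBO i).mul_isLittleO (hBo j)
  simpa using hprod.const_mul_left (μ i j)
end
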